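/- Let K ⊆ E be a regular cone with dual cone K*, and let F be a ν-normal barrier for K with negative curvature (for every x ∈ int K and h ∈ K, D³F(x)[h] is negative semidefinite). Then for every x ∈ int K and every h ∈ K: (i) ∇²F(x)h ∈ K*, and (ii) ∇F(x+h) − ∇F(x) ∈ K*. -/

import Mathlib

open Set Filter Topology RealInnerProductSpace

noncomputable section

/-- The dual cone of a set `K` in a real inner product space. -/
def dualConeSet {E : Type*} [NormedAddCommGroup E] [InnerProductSpace ℝ E] (K : Set E) :
    Set E :=
  {s : E | ∀ x ∈ K, 0 ≤ ⟪s, x⟫}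

/-- A regular cone: closed, convex, pointed, with nonempty interior. -/
structure IsRegularCone {E : Type*} [NormedAddCommGroup E] [InnerProductSpace ℝ E]
    (K : Set E) : Prop where
  isClosed : IsClosed K
  convex : Convex ℝ K
  smul_mem : ∀ ⦃x : E⦄, x ∈ K → ∀ ⦃t : ℝ⦄, 0 ≤ t → t • x ∈ K
  pointed : ∀ ⦃x : E⦄, x ∈ K → -x ∈ K → x = 0
  interior_nonempty : (interior K).Nonempty

/-- The Hessian of `f` at `x`, as a continuous linear map (the derivative of the gradient). -/
def hess {E : Type*} [NormedAddCommGroup E] [InnerProductSpace ℝ E] [CompleteSpace E]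
    (f : E → ℝ) (x : E) : E →L[ℝ] E :=
  fderiv ℝ (gradient f) x

/-- A ν-normal barrier for the cone `K`: C³, convex, with positive definite Hessians on
`int K`, self-concordant, and ν-logarithmically homogeneous. -/
structure IsNormalBarrier {E : Type*} [NormedAddCommGroup E] [InnerProductSpace ℝ E]
    [CompleteSpace E] (K : Set E) (F : E → ℝ) (ν : ℝ) : Prop where
  one_le_nu : 1 ≤ ν
  smooth : ContDiffOn ℝ 3 F (interior K)
  convexOn : ConvexOn ℝ (interior K) F
  hess_posdef : ∀ x ∈ interior K, ∀ h : E, h ≠ 0 → 0 < ⟪hess F x h, h⟫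
  selfConcordant : ∀ x ∈ interior K, ∀ h : E,
    |iteratedFDeriv ℝ 3 F x ![h, h, h]| ≤ 2 * ⟪hess F x h, h⟫ ^ ((3 : ℝ) / 2)
  logHom : ∀ x ∈ interior K, ∀ τ : ℝ, 0 < τ → F (τ • x) = F x - ν * Real.log τ

section Aux

open Pointwise

variable {E : Type*} [NormedAddCommGroup E] [InnerProductSpace ℝ E] {K : Set E}

lemma IsRegularCone.add_mem' (hK : IsRegularCone K) {a b : E} (ha : a ∈ K) (hb : b ∈ K) :
    a + b ∈ K := by
  have h := hK.convex ha hb (by norm_num : (0:ℝ) ≤ 1/2) (by norm_num : (0:ℝ) ≤ 1/2) (by norm_num)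
  have h2 := hK.smul_mem h (by norm_num : (0:ℝ) ≤ 2)
  convert h2 using 1
  rw [smul_add, smul_smul, smul_smul]
  norm_num

lemma IsRegularCone.add_mem_interior (hK : IsRegularCone K) {x h : E}
    (hx : x ∈ interior K) (hh : h ∈ K) : x + h ∈ interior K := by
  have hopen : IsOpen ((fun z => z + h) '' interior K) :=
    (Homeomorph.addRight h).isOpenMap _ isOpen_interior
  have hsub : (fun z => z + h) '' interior K ⊆ K := by
    rintro _ ⟨z, hz, rfl⟩
    exact hK.add_mem' (interior_subset hz) hh
  exact interior_maximal hsub hopen ⟨x, hx, rfl⟩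

lemma IsRegularCone.smul_mem_interior (hK : IsRegularCone K) {x : E} {t : ℝ}
    (hx : x ∈ interior K) (ht : 0 < t) : t • x ∈ interior K := by
  have h1 : t • x ∈ interior (t • K) := by
    rw [interior_smul₀ ht.ne' K]
    exact ⟨x, hx, rfl⟩
  refine interior_mono ?_ h1
  rintro _ ⟨z, hz, rfl⟩
  exact hK.smul_mem hz ht.le

lemma iteratedFDeriv_three_apply (F : E → ℝ) (z a b c : E) [CompleteSpace E] :
    iteratedFDeriv ℝ 3 F z ![a, b, c] = fderiv ℝ (fderiv ℝ (fderiv ℝ F)) z a b c := by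
  rw [iteratedFDeriv_succ_apply_right]
  have hinit : Fin.init ![a, b, c] = ![a, b] := by
    ext i
    fin_cases i <;> rfl
  rw [hinit, iteratedFDeriv_two_apply]
  rfl

lemma hess_inner_eq {E : Type*} [NormedAddCommGroup E] [InnerProductSpace ℝ E]
    [FiniteDimensional ℝ E] (F : E → ℝ) (z : E)
    (hDg : HasFDerivAt (fderiv ℝ F) (fderiv ℝ (fderiv ℝ F) z) z) (v w : E) :
    ⟪hess F z v, w⟫ = fderiv ℝ (fderiv ℝ F) z v w := by
  set Blin : E →ₗ[ℝ] E :=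
    { toFun := fun u => (InnerProductSpace.toDual ℝ E).symm (fderiv ℝ (fderiv ℝ F) z u)
      map_add' := by intro a b; simp [map_add]
      map_smul' := by intro c a; simp } with hBlin
  set B : E →L[ℝ] E := Blin.toContinuousLinearMap with hB
  have hkey : HasFDerivAt (gradient F) B z := by
    have hlo := hDg.isLittleO
    refine HasFDerivAt.of_isLittleO ?_
    have heq : (fun u => gradient F u - gradient F z - B (u - z))
        = fun u => (InnerProductSpace.toDual ℝ E).symm
            (fderiv ℝ F u - fderiv ℝ F z - fderiv ℝ (fderiv ℝ F) z (u - z)) := by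
      funext u
      rw [map_sub ((InnerProductSpace.toDual ℝ E).symm),
        map_sub ((InnerProductSpace.toDual ℝ E).symm)]
      rfl
    rw [heq, ← Asymptotics.isLittleO_norm_left]
    simp only [LinearIsometryEquiv.norm_map]
    rw [Asymptotics.isLittleO_norm_left]
    exact hlo
  have h2 : hess F z = B := hkey.fderiv
  rw [h2]
  exact InnerProductSpace.toDual_symm_apply

lemma gradient_inner_eq {E : Type*} [NormedAddCommGroup E] [InnerProductSpace ℝ E]
    [FiniteDimensional ℝ E] (F : E → ℝ) (z w : E) :
    ⟪gradient F z, w⟫ = fderiv ℝ F z w :=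
  InnerProductSpace.toDual_symm_apply

end Aux

/-- Theorem `th-Mon`: for a normal barrier with negative curvature,
`∇²F(x) h ∈ K*` and `∇F(x+h) − ∇F(x) ∈ K*` whenever `x ∈ int K` and `h ∈ K`. -/
theorem negative_curvature_monotone {E : Type*} [NormedAddCommGroup E]
    [InnerProductSpace ℝ E] [FiniteDimensional ℝ E]
    (K : Set E) (hK : IsRegularCone K) (F : E → ℝ) (ν : ℝ)
    (hF : IsNormalBarrier K F ν)
    (hNC : ∀ x ∈ interior K, ∀ h ∈ K, ∀ u : E, iteratedFDeriv ℝ 3 F x ![h, u, u] ≤ 0) :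
    ∀ x ∈ interior K, ∀ h ∈ K,
      hess F x h ∈ dualConeSet K ∧ gradient F (x + h) - gradient F x ∈ dualConeSet K := by
  classical
  have hO : IsOpen (interior K) := isOpen_interior
  have hOK : interior K ⊆ K := interior_subset
  have hC3 : ∀ z ∈ interior K, ContDiffAt ℝ 3 F z := fun z hz =>
    hF.smooth.contDiffAt (hO.mem_nhds hz)
  have hC2 : ∀ z ∈ interior K, ContDiffAt ℝ 2 (fderiv ℝ F) z := fun z hz =>
    (hC3 z hz).fderiv_right (by norm_num)
  have hC1 : ∀ z ∈ interior K, ContDiffAt ℝ 1 (fderiv ℝ (fderiv ℝ F)) z := fun z hz =>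
    (hC2 z hz).fderiv_right (by norm_num)
  have hDF : ∀ z ∈ interior K, HasFDerivAt F (fderiv ℝ F z) z := fun z hz =>
    ((hC3 z hz).differentiableAt (by norm_num)).hasFDerivAt
  have hDg : ∀ z ∈ interior K, HasFDerivAt (fderiv ℝ F) (fderiv ℝ (fderiv ℝ F) z) z :=
    fun z hz => ((hC2 z hz).differentiableAt (by norm_num)).hasFDerivAt
  have hDg2 : ∀ z ∈ interior K, HasFDerivAt (fderiv ℝ (fderiv ℝ F))
      (fderiv ℝ (fderiv ℝ (fderiv ℝ F)) z) z := fun z hz =>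
    ((hC1 z hz).differentiableAt one_ne_zero).hasFDerivAt
  -- symmetry of the second derivative of F
  have hsymF : ∀ z ∈ interior K, ∀ a b : E,
      fderiv ℝ (fderiv ℝ F) z a b = fderiv ℝ (fderiv ℝ F) z b a :=
    fun z hz a b => ((hC3 z hz).isSymmSndFDerivAt (by norm_num)) a b
  -- symmetry in the first two slots of the third derivative
  have hsymg : ∀ z ∈ interior K, ∀ a b c : E, fderiv ℝ (fderiv ℝ (fderiv ℝ F)) z a b c
      = fderiv ℝ (fderiv ℝ (fderiv ℝ F)) z b a c := by
    intro z hz a b c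
    have h := ((hC2 z hz).isSymmSndFDerivAt (by norm_num)) a b
    exact congrArg (fun L : E →L[ℝ] ℝ => L c) h
  -- symmetry in the last two slots of the third derivative
  have hswap23 : ∀ z ∈ interior K, ∀ a b c : E, fderiv ℝ (fderiv ℝ (fderiv ℝ F)) z a b c
      = fderiv ℝ (fderiv ℝ (fderiv ℝ F)) z a c b := by
    intro z hz a b c
    have e : ∀ b c : E, HasFDerivAt (fun w => fderiv ℝ (fderiv ℝ F) w b c)
        (((ContinuousLinearMap.apply ℝ ℝ c).comp
            (ContinuousLinearMap.apply ℝ (E →L[ℝ] ℝ) b)).comp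
          (fderiv ℝ (fderiv ℝ (fderiv ℝ F)) z)) z := by
      intro b c
      have h := HasFDerivAt.comp (g := (((ContinuousLinearMap.apply ℝ ℝ c).comp
          (ContinuousLinearMap.apply ℝ (E →L[ℝ] ℝ) b)) : (E →L[ℝ] E →L[ℝ] ℝ) → ℝ)) z
          (ContinuousLinearMap.hasFDerivAt _) (hDg2 z hz)
      simpa [Function.comp_def] using h
    have heq : (fun w => fderiv ℝ (fderiv ℝ F) w b c)
        =ᶠ[𝓝 z] fun w => fderiv ℝ (fderiv ℝ F) w c b := by
      filter_upwards [hO.mem_nhds hz] with w hw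
      exact hsymF w hw b c
    have h1 := (e b c).fderiv
    have h2 := (e c b).fderiv
    have h3 : fderiv ℝ (fun w => fderiv ℝ (fderiv ℝ F) w b c) z
        = fderiv ℝ (fun w => fderiv ℝ (fderiv ℝ F) w c b) z := heq.fderiv_eq
    rw [h1, h2] at h3
    have := congrArg (fun L : E →L[ℝ] ℝ => L a) h3
    simpa using this
  -- membership of the ray in the interior
  have hline : ∀ x ∈ interior K, ∀ h ∈ K, ∀ t : ℝ, 0 ≤ t → x + t • h ∈ interior K := by
    intro x hx h hh t ht
    exact hK.add_mem_interior hx (hK.smul_mem hh ht)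
  -- derivative of φ along the ray
  have hφ' : ∀ x ∈ interior K, ∀ h ∈ K, ∀ y : E, ∀ t : ℝ, 0 ≤ t →
      HasDerivAt (fun s : ℝ => fderiv ℝ F (x + s • h) y)
        (fderiv ℝ (fderiv ℝ F) (x + t • h) h y) t := by
    intro x hx h hh y t ht
    have hlderiv : HasDerivAt (fun s : ℝ => x + s • h) h t := by
      simpa using ((hasDerivAt_id t).smul_const h).const_add x
    have h1 := (hDg _ (hline x hx h hh t ht)).comp_hasDerivAt t hlderiv
    have h2 := ((ContinuousLinearMap.apply ℝ ℝ y).hasFDerivAt).comp_hasDerivAt t h1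
    simpa [Function.comp_def] using h2
  -- derivative of ψ along the ray
  have hψ' : ∀ x ∈ interior K, ∀ h ∈ K, ∀ y : E, ∀ t : ℝ, 0 ≤ t →
      HasDerivAt (fun s : ℝ => fderiv ℝ (fderiv ℝ F) (x + s • h) h y)
        (fderiv ℝ (fderiv ℝ (fderiv ℝ F)) (x + t • h) h h y) t := by
    intro x hx h hh y t ht
    have hlderiv : HasDerivAt (fun s : ℝ => x + s • h) h t := by
      simpa using ((hasDerivAt_id t).smul_const h).const_add x
    have h1 := (hDg2 _ (hline x hx h hh t ht)).comp_hasDerivAt (l := fderiv ℝ (fderiv ℝ F)) t hlderiv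
    have h2 := (((ContinuousLinearMap.apply ℝ ℝ y).comp
        (ContinuousLinearMap.apply ℝ (E →L[ℝ] ℝ) h)).hasFDerivAt).comp_hasDerivAt t h1
    simpa [Function.comp_def] using h2
  -- homogeneity of the differential
  have hhom : ∀ z ∈ interior K, ∀ τ : ℝ, 0 < τ → ∀ v : E,
      fderiv ℝ F z v = τ * fderiv ℝ F (τ • z) v := by
    intro z hz τ hτ v
    have hτz : τ • z ∈ interior K := hK.smul_mem_interior hz hτ
    have hc : HasFDerivAt (fun w : E => τ • w) (τ • ContinuousLinearMap.id ℝ E) z := by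
      have := (τ • ContinuousLinearMap.id ℝ E).hasFDerivAt (x := z)
      exact this
    have hG : HasFDerivAt (fun w => F (τ • w))
        ((fderiv ℝ F (τ • z)).comp (τ • ContinuousLinearMap.id ℝ E)) z :=
      (hDF _ hτz).comp z hc
    have heq : (fun w => F (τ • w)) =ᶠ[𝓝 z] fun w => F w - ν * Real.log τ := by
      filter_upwards [hO.mem_nhds hz] with w hw
      exact hF.logHom w hw τ hτ
    have h2 : HasFDerivAt (fun w => F w - ν * Real.log τ)
        ((fderiv ℝ F (τ • z)).comp (τ • ContinuousLinearMap.id ℝ E)) z :=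
      hG.congr_of_eventuallyEq heq.symm
    have h3 : HasFDerivAt (fun w => F w - ν * Real.log τ) (fderiv ℝ F z) z :=
      (hDF z hz).sub_const _
    have h4 := h2.unique h3
    have h5 := congrArg (fun L : E →L[ℝ] ℝ => L v) h4
    simp only [ContinuousLinearMap.coe_comp', Function.comp_apply,
      ContinuousLinearMap.smul_apply, ContinuousLinearMap.coe_id', id_eq, map_smul,
      smul_eq_mul] at h5
    linarith [h5]
  -- nonnegativity of the second derivative in two cone directions, interior case
  have key : ∀ x ∈ interior K, ∀ h ∈ interior K, ∀ y ∈ K,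
      0 ≤ fderiv ℝ (fderiv ℝ F) x h y := by
    intro x hx h hh y hy
    have hhK : h ∈ K := hOK hh
    set φ : ℝ → ℝ := fun t => fderiv ℝ F (x + t • h) y with hφdef
    set ψ : ℝ → ℝ := fun t => fderiv ℝ (fderiv ℝ F) (x + t • h) h y with hψdef
    have hψ'nonpos : ∀ t : ℝ, 0 ≤ t →
        fderiv ℝ (fderiv ℝ (fderiv ℝ F)) (x + t • h) h h y ≤ 0 := by
      intro t ht
      have hz := hline x hx h hhK t ht
      have heq3 : fderiv ℝ (fderiv ℝ (fderiv ℝ F)) (x + t • h) h h y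
          = iteratedFDeriv ℝ 3 F (x + t • h) ![y, h, h] := by
        rw [hswap23 _ hz h h y, hsymg _ hz h y h, iteratedFDeriv_three_apply]
      rw [heq3]
      exact hNC _ hz y hy h
    have hψle : ∀ t : ℝ, 0 < t → ψ t ≤ ψ 0 := by
      intro t ht
      obtain ⟨c, hc, hceq⟩ := exists_hasDerivAt_eq_slope ψ
        (fun s => fderiv ℝ (fderiv ℝ (fderiv ℝ F)) (x + s • h) h h y) ht
        (fun s hs => (hψ' x hx h hhK y s hs.1).continuousAt.continuousWithinAt)
        (fun s hs => hψ' x hx h hhK y s hs.1.le)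
      have hle := hψ'nonpos c hc.1.le
      rw [hceq] at hle
      rw [div_nonpos_iff] at hle
      rcases hle with ⟨_, h2⟩ | ⟨h1, _⟩ <;> linarith
    have hφle : ∀ t : ℝ, 0 < t → φ t ≤ φ 0 + t * ψ 0 := by
      intro t ht
      obtain ⟨c, hc, hceq⟩ := exists_hasDerivAt_eq_slope φ ψ ht
        (fun s hs => (hφ' x hx h hhK y s hs.1).continuousAt.continuousWithinAt)
        (fun s hs => hφ' x hx h hhK y s hs.1.le)
      have h1 : ψ c ≤ ψ 0 := hψle c hc.1
      rw [hceq, div_le_iff₀ (by linarith : (0:ℝ) < t - 0)] at h1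
      linarith
    -- φ tends to 0 at infinity
    have hpath : Tendsto (fun t : ℝ => t⁻¹ • x + h) atTop (𝓝 h) := by
      have h2 : Tendsto (fun t : ℝ => t⁻¹ • x) atTop (𝓝 ((0:ℝ) • x)) :=
        tendsto_inv_atTop_zero.smul_const x
      have h3 := h2.add_const h
      simpa using h3
    have hmemO : ∀ᶠ t in (atTop : Filter ℝ), t⁻¹ • x + h ∈ interior K :=
      hpath.eventually (hO.mem_nhds hh)
    have hcont : ContinuousAt (fun w => fderiv ℝ F w y) h :=
      ((ContinuousLinearMap.apply ℝ ℝ y).continuous.continuousAt).comp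
        ((hC2 h hh).continuousAt)
    have hc : Tendsto (fun t : ℝ => fderiv ℝ F (t⁻¹ • x + h) y) atTop
        (𝓝 (fderiv ℝ F h y)) := hcont.tendsto.comp hpath
    have hφ0 : Tendsto φ atTop (𝓝 0) := by
      have h1 : Tendsto (fun t : ℝ => t⁻¹ * fderiv ℝ F (t⁻¹ • x + h) y) atTop
          (𝓝 (0 * fderiv ℝ F h y)) := tendsto_inv_atTop_zero.mul hc
      rw [zero_mul] at h1
      refine Tendsto.congr' ?_ h1
      filter_upwards [hmemO, eventually_gt_atTop (0:ℝ)] with t htO ht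
      have hth := hhom _ htO t ht y
      have hxth : t • (t⁻¹ • x + h) = x + t • h := by
        rw [smul_add, smul_smul, mul_inv_cancel₀ (ne_of_gt ht), one_smul]
      rw [hxth] at hth
      simp only [hφdef]
      rw [hth]
      field_simp
    -- conclude
    have hψ0 : ψ 0 = fderiv ℝ (fderiv ℝ F) x h y := by
      simp [hψdef]
    by_contra hneg
    push_neg at hneg
    have hψ0neg : ψ 0 < 0 := by rw [hψ0]; exact hneg
    have h2 : ∀ᶠ t in (atTop : Filter ℝ), -1 < φ t :=
      hφ0.eventually (eventually_gt_nhds (by norm_num : (-1:ℝ) < 0))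
    have h3 : ∀ᶠ t in (atTop : Filter ℝ), max 1 ((-1 - φ 0) / ψ 0) ≤ t :=
      eventually_ge_atTop _
    obtain ⟨t, ht2, ht3⟩ := (h2.and h3).exists
    have htpos : (0:ℝ) < t := lt_of_lt_of_le one_pos (le_trans (le_max_left _ _) ht3)
    have hmul : t * ψ 0 ≤ ((-1 - φ 0) / ψ 0) * ψ 0 :=
      mul_le_mul_of_nonpos_right (le_trans (le_max_right _ _) ht3) hψ0neg.le
    rw [div_mul_cancel₀ _ (ne_of_lt hψ0neg)] at hmul
    have := hφle t htpos
    linarith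
  -- extend to h in K by approximation
  have key' : ∀ x ∈ interior K, ∀ h ∈ K, ∀ y ∈ K, 0 ≤ fderiv ℝ (fderiv ℝ F) x h y := by
    intro x hx h hh y hy
    obtain ⟨h0, hh0⟩ := hK.interior_nonempty
    have hεpos : ∀ ε : ℝ, 0 < ε →
        0 ≤ fderiv ℝ (fderiv ℝ F) x h y + ε * fderiv ℝ (fderiv ℝ F) x h0 y := by
      intro ε hε
      have hmem : h + ε • h0 ∈ interior K := by
        have := hK.add_mem_interior (hK.smul_mem_interior hh0 hε) hh
        rwa [add_comm] at this
      have hk := key x hx _ hmem y hy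
      have : fderiv ℝ (fderiv ℝ F) x (h + ε • h0) y
          = fderiv ℝ (fderiv ℝ F) x h y + ε * fderiv ℝ (fderiv ℝ F) x h0 y := by
        rw [map_add, map_smul]
        simp [smul_eq_mul]
      linarith [hk, this.symm.le]
    by_contra hneg
    push_neg at hneg
    set A := fderiv ℝ (fderiv ℝ F) x h y with hA
    set B := fderiv ℝ (fderiv ℝ F) x h0 y with hB
    rcases le_or_gt B 0 with hBle | hBpos
    · have := hεpos 1 one_pos
      linarith
    · have hε : 0 < -A / (2 * B) := by
        apply div_pos (by linarith) (by linarith)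
      have h1 := hεpos _ hε
      have h2 : (-A / (2 * B)) * B = -A / 2 := by
        field_simp
      rw [h2] at h1
      linarith
  -- identification of hess with the second differential
  have hhess : ∀ z ∈ interior K, ∀ v w : E,
      ⟪hess F z v, w⟫ = fderiv ℝ (fderiv ℝ F) z v w := fun z hz v w =>
    hess_inner_eq F z (hDg z hz) v w
  have hgrad_inner : ∀ z : E, ∀ w : E, ⟪gradient F z, w⟫ = fderiv ℝ F z w :=
    fun z w => gradient_inner_eq F z w
  -- final assembly
  intro x hx h hh
  constructor
  · intro y hy
    rw [hhess x hx h y]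
    exact key' x hx h hh y hy
  · intro y hy
    obtain ⟨c, hc, hceq⟩ := exists_hasDerivAt_eq_slope
      (fun t : ℝ => fderiv ℝ F (x + t • h) y)
      (fun t : ℝ => fderiv ℝ (fderiv ℝ F) (x + t • h) h y) one_pos
      (fun s hs => (hφ' x hx h hh y s hs.1).continuousAt.continuousWithinAt)
      (fun s hs => hφ' x hx h hh y s hs.1.le)
    have hge : 0 ≤ fderiv ℝ (fderiv ℝ F) (x + c • h) h y :=
      key' _ (hline x hx h hh c hc.1.le) h hh y hy
    rw [hceq] at hge
    norm_num at hge
    rw [inner_sub_left, hgrad_inner, hgrad_inner]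
    linarith
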